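/- There exists a function c_l : (0,1) → ℝ, depending only on ε, such that for every board length n ≥ 3, every dimension d ≥ 2, and every ε ∈ (0,1), the mixing time of the Rook's Walk satisfies t_mix(ε) ≥ (d(n−1)/(2n))·log d + c_l(ε)·(d(n−1)/n). -/

import Mathlib

open Finset

noncomputable section

/-- Total variation distance between two distributions on a finite set. -/
def tv {S : Type*} [Fintype S] (μ ν : S → ℝ) : ℝ :=
  (∑ s, |μ s - ν s|) / 2

/-- The state space of the Rook's Walk: a `d`-dimensional board of side length `n`. -/
abbrev RW.State (n d : ℕ) : Type := Fin d → Fin n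

/-- The transition matrix of the Rook's Walk on `{1,…,n}^d`. -/
def RW.P (n d : ℕ) : Matrix (RW.State n d) (RW.State n d) ℝ :=
  Matrix.of fun x y =>
    if hammingDist x y = 1 then 1 / ((d : ℝ) * ((n : ℝ) - 1)) else 0

/-- The (uniform) stationary distribution of the Rook's Walk. -/
def RW.pi (n d : ℕ) : RW.State n d → ℝ := fun _ => 1 / (n : ℝ) ^ d

/-- Worst-case total variation distance to stationarity at time `t`. -/
def RW.dist (n d : ℕ) (t : ℕ) : ℝ :=
  ⨆ x : RW.State n d, tv ((RW.P n d ^ t) x) (RW.pi n d)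

/-- The mixing time of the Rook's Walk. -/
def RW.tmix (n d : ℕ) (ε : ℝ) : ℕ := sInf {t : ℕ | RW.dist n d t ≤ ε}

/- ======================= auxiliary development ======================= -/

section Aux
variable {n d : ℕ}

lemma ham_update_eq_one (x : Fin d → Fin n) (i : Fin d) (b : Fin n) (hb : b ≠ x i) :
    hammingDist x (Function.update x i b) = 1 := by
  unfold hammingDist
  rw [Finset.card_eq_one]
  refine ⟨i, ?_⟩
  ext j
  simp only [mem_filter, mem_univ, true_and, mem_singleton]
  constructor
  · intro h
    by_contra hj
    rw [Function.update_of_ne hj] at h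
    exact h rfl
  · rintro rfl
    rw [Function.update_self]
    exact fun h => hb h.symm

lemma ham_update_reduce (x y : Fin d → Fin n) (i : Fin d) (hi : x i ≠ y i) :
    hammingDist (Function.update x i (y i)) y + 1 = hammingDist x y := by
  unfold hammingDist
  have hset : ({j | Function.update x i (y i) j ≠ y j} : Finset (Fin d))
      = ({j | x j ≠ y j} : Finset (Fin d)).erase i := by
    ext j
    simp only [mem_filter, mem_univ, true_and, mem_erase]
    by_cases hj : j = i
    · subst hj; simp [Function.update_self]
    · rw [Function.update_of_ne hj]; tauto
  rw [hset, Finset.card_erase_of_mem (by simp [hi])]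
  have : 0 < ({j | x j ≠ y j} : Finset (Fin d)).card :=
    Finset.card_pos.2 ⟨i, by simp [hi]⟩
  omega

lemma ham_eq_one_iff (x y : Fin d → Fin n) :
    hammingDist x y = 1 ↔ ∃ i b, b ≠ x i ∧ y = Function.update x i b := by
  constructor
  · intro h
    rw [hammingDist, Finset.card_eq_one] at h
    obtain ⟨i0, hi0⟩ := h
    have hmem : ∀ k, x k ≠ y k ↔ k = i0 := by
      intro k
      constructor
      · intro hk
        have : k ∈ ({j | x j ≠ y j} : Finset (Fin d)) := by simp [hk]
        rw [hi0] at this; simpa using this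
      · intro hk
        subst hk
        have : k ∈ ({j | x j ≠ y j} : Finset (Fin d)) := by rw [hi0]; simp
        simpa using this
    refine ⟨i0, y i0, fun h => ((hmem i0).2 rfl) h.symm, ?_⟩
    ext j
    by_cases hj : j = i0
    · subst hj; norm_num
    · rw [Function.update_of_ne hj]
      by_contra hne
      have : x j ≠ y j := fun h => hne (congrArg Fin.val h.symm)
      exact hj ((hmem j).1 this)
  · rintro ⟨i, b, hb, rfl⟩
    exact ham_update_eq_one x i b hb

lemma sum_neighbors (x : Fin d → Fin n) (F : (Fin d → Fin n) → ℝ) :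
    ∑ y, (if hammingDist x y = 1 then 1 else 0 : ℝ) * F y
      = ∑ i : Fin d, ∑ b ∈ univ.erase (x i), F (Function.update x i b) := by
  simp only [ite_mul, one_mul, zero_mul]
  rw [← Finset.sum_filter]
  rw [Finset.sum_sigma']
  refine (Finset.sum_bij (fun p _ => Function.update x p.1 p.2) ?_ ?_ ?_ ?_).symm
  · rintro ⟨i, b⟩ hp
    simp only [mem_sigma, mem_univ, mem_erase, true_and] at hp
    simp only [mem_filter, mem_univ, true_and]
    exact ham_update_eq_one x i b hp.1
  · rintro ⟨i, b⟩ hp ⟨j, c⟩ hq heq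
    dsimp only at heq
    simp only [mem_sigma, mem_univ, mem_erase, true_and] at hp hq
    by_cases hij : i = j
    · subst hij
      have := congrFun heq i
      simp only [Function.update_self] at this
      simp [this]
    · exfalso
      have h1 := congrFun heq i
      rw [Function.update_self, Function.update_of_ne hij] at h1
      exact hp.1 h1
  · intro y hy
    simp only [mem_filter, mem_univ, true_and] at hy
    obtain ⟨i, b, hb, rfl⟩ := (ham_eq_one_iff x y).1 hy
    exact ⟨⟨i, b⟩, by simp [hb], rfl⟩
  · intros; rfl

/-- eigenfunction on one coordinate -/
def gfun (n : ℕ) : Fin n → ℝ := fun a => (if (a : ℕ) = 0 then 1 else 0) - 1/n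

/-- distinguishing statistic -/
def ffun (n d : ℕ) : (Fin d → Fin n) → ℝ := fun x => ∑ i, gfun n (x i)

/-- the relevant eigenvalue -/
def lamc (n d : ℕ) : ℝ := 1 - (n:ℝ) / ((d:ℝ) * ((n:ℝ) - 1))

lemma gsum (hn : 0 < n) : ∑ b, gfun n b = 0 := by
  unfold gfun
  rw [Finset.sum_sub_distrib, Finset.sum_const, Finset.card_univ, Fintype.card_fin]
  have h1 : ∑ b : Fin n, (if (b : ℕ) = 0 then (1:ℝ) else 0) = 1 := by
    rw [Finset.sum_congr rfl (g := fun b => if b = (⟨0, hn⟩ : Fin n) then (1:ℝ) else 0)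
      (fun b _ => by simp [Fin.ext_iff])]
    simp
  rw [h1]
  have : (n:ℝ) ≠ 0 := Nat.cast_ne_zero.2 hn.ne'
  rw [nsmul_eq_mul, mul_one_div_cancel this, sub_self]

lemma gsum_erase (hn : 0 < n) (a : Fin n) :
    ∑ b ∈ univ.erase a, gfun n b = - gfun n a := by
  have h := gsum (n := n) hn
  rw [← Finset.add_sum_erase _ _ (mem_univ a)] at h
  linarith

lemma g_sq_diff_le (a b : Fin n) : (gfun n b - gfun n a)^2 ≤ 1 := by
  have : gfun n b - gfun n a
      = (if (b:ℕ) = 0 then (1:ℝ) else 0) - (if (a:ℕ) = 0 then (1:ℝ) else 0) := by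
    unfold gfun; ring
  rw [this]
  by_cases hb : (b:ℕ) = 0 <;> by_cases ha : (a:ℕ) = 0 <;> simp [hb, ha]

lemma ffun_update (x : Fin d → Fin n) (i : Fin d) (b : Fin n) :
    ffun n d (Function.update x i b) = ffun n d x - gfun n (x i) + gfun n b := by
  unfold ffun
  rw [← Finset.add_sum_erase _ _ (mem_univ i),
    ← Finset.add_sum_erase _ (fun j => gfun n (x j)) (mem_univ i)]
  rw [Function.update_self]
  have : ∑ j ∈ univ.erase i, gfun n (Function.update x i b j)
      = ∑ j ∈ univ.erase i, gfun n (x j) := by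
    refine Finset.sum_congr rfl fun j hj => ?_
    rw [Function.update_of_ne (Finset.ne_of_mem_erase hj)]
  rw [this]; ring

/-- generic TV lower bound via a distinguishing set -/
lemma tv_ge_diff {S : Type*} [Fintype S] [DecidableEq S] (μ ν : S → ℝ)
    (hμ : ∑ y, μ y = 1) (hν : ∑ y, ν y = 1) (A : Finset S) :
    ∑ y ∈ A, μ y - ∑ y ∈ A, ν y ≤ tv μ ν := by
  have h1 : ∑ y ∈ A, (μ y - ν y) ≤ ∑ y ∈ A, |μ y - ν y| :=
    Finset.sum_le_sum fun y _ => le_abs_self _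
  have h2 : ∑ y ∈ Aᶜ, (ν y - μ y) ≤ ∑ y ∈ Aᶜ, |μ y - ν y| :=
    Finset.sum_le_sum fun y _ => by rw [abs_sub_comm]; exact le_abs_self _
  have h3 : ∑ y ∈ A, |μ y - ν y| + ∑ y ∈ Aᶜ, |μ y - ν y| = ∑ y, |μ y - ν y| :=
    Finset.sum_add_sum_compl A _
  have h4 : ∑ y ∈ A, μ y + ∑ y ∈ Aᶜ, μ y = 1 := by rw [Finset.sum_add_sum_compl, hμ]
  have h5 : ∑ y ∈ A, ν y + ∑ y ∈ Aᶜ, ν y = 1 := by rw [Finset.sum_add_sum_compl, hν]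
  have e1 : ∑ y ∈ A, (μ y - ν y) = ∑ y ∈ A, μ y - ∑ y ∈ A, ν y :=
    Finset.sum_sub_distrib _ _
  have e2 : ∑ y ∈ Aᶜ, (ν y - μ y) = ∑ y ∈ Aᶜ, ν y - ∑ y ∈ Aᶜ, μ y :=
    Finset.sum_sub_distrib _ _
  unfold tv
  linarith

/-- the `all-zero` starting state -/
def x0 (n d : ℕ) (hn : 3 ≤ n) : RW.State n d := fun _ => ⟨0, by omega⟩

lemma ffun_x0 (hn : 3 ≤ n) : ffun n d (x0 n d hn) = (d:ℝ) * ((n:ℝ) - 1) / (n:ℝ) := by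
  have hnR : (0:ℝ) < (n:ℝ) := by
    have : (3:ℝ) ≤ (n:ℝ) := by exact_mod_cast hn
    linarith
  unfold ffun x0 gfun
  simp only [if_pos rfl]
  rw [Finset.sum_const, Finset.card_univ, Fintype.card_fin, nsmul_eq_mul]
  field_simp
  simp

variable (hn : 3 ≤ n) (hd : 2 ≤ d)
include hn hd

lemma den_pos : (0:ℝ) < (d:ℝ) * ((n:ℝ) - 1) := by
  have h1 : (3:ℝ) ≤ (n:ℝ) := by exact_mod_cast hn
  have h2 : (2:ℝ) ≤ (d:ℝ) := by exact_mod_cast hd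
  nlinarith

lemma lam_pos : 0 < lamc n d := by
  have h1 : (3:ℝ) ≤ (n:ℝ) := by exact_mod_cast hn
  have h2 : (2:ℝ) ≤ (d:ℝ) := by exact_mod_cast hd
  have hden := den_pos hn hd
  have : (n:ℝ) < (d:ℝ) * ((n:ℝ) - 1) := by nlinarith
  unfold lamc
  rw [sub_pos, div_lt_one hden]
  exact this

lemma lam_lt_one : lamc n d < 1 := by
  have h1 : (3:ℝ) ≤ (n:ℝ) := by exact_mod_cast hn
  have hden := den_pos hn hd
  unfold lamc
  have : 0 < (n:ℝ) / ((d:ℝ) * ((n:ℝ) - 1)) := by positivity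
  linarith

/-- generic sum against the kernel -/
lemma P_sum (x : RW.State n d) (F : RW.State n d → ℝ) :
    ∑ y, RW.P n d x y * F y
      = (1/((d:ℝ) * ((n:ℝ) - 1))) *
        ∑ i : Fin d, ∑ b ∈ univ.erase (x i), F (Function.update x i b) := by
  rw [← sum_neighbors, Finset.mul_sum]
  refine Finset.sum_congr rfl fun y _ => ?_
  by_cases h : hammingDist x y = 1 <;> simp [RW.P, h] <;> ring

lemma P_rowsum (x : RW.State n d) : ∑ y, RW.P n d x y = 1 := by
  have := P_sum hn hd x (fun _ => 1)
  simp only [mul_one] at this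
  rw [this]
  have hcard : ∀ i : Fin d, ((univ.erase (x i)).card : ℝ) = (n:ℝ) - 1 := by
    intro i
    rw [Finset.card_erase_of_mem (mem_univ _), Finset.card_univ, Fintype.card_fin]
    have h1 : (1:ℕ) ≤ n := by omega
    push_cast [h1]
    ring
  rw [Finset.sum_congr rfl (fun i _ => Finset.sum_const (1:ℝ))]
  simp only [nsmul_eq_mul, mul_one]
  rw [Finset.sum_congr rfl (fun i _ => hcard i), Finset.sum_const, Finset.card_univ,
    Fintype.card_fin, nsmul_eq_mul]
  have hden := den_pos hn hd
  field_simp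
  have hn1 : (0:ℝ) < (n:ℝ) - 1 := by
    have : (3:ℝ) ≤ (n:ℝ) := by exact_mod_cast hn
    linarith
  exact div_self hn1.ne'

lemma P_symm (x y : RW.State n d) : RW.P n d x y = RW.P n d y x := by
  simp [RW.P, hammingDist_comm x y]

lemma P_nonneg (x y : RW.State n d) : 0 ≤ RW.P n d x y := by
  have hden := den_pos hn hd
  unfold RW.P
  dsimp
  split <;> positivity

lemma P_colsum (y : RW.State n d) : ∑ x, RW.P n d x y = 1 := by
  rw [Finset.sum_congr rfl (fun x _ => P_symm hn hd x y)]
  exact P_rowsum hn hd y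

lemma inner_f (x : RW.State n d) (i : Fin d) :
    ∑ b ∈ univ.erase (x i), ffun n d (Function.update x i b)
      = ((n:ℝ) - 1) * (ffun n d x - gfun n (x i)) - gfun n (x i) := by
  have h0 : (0:ℕ) < n := by omega
  rw [Finset.sum_congr rfl (fun b _ => ffun_update x i b)]
  rw [Finset.sum_add_distrib, Finset.sum_const, nsmul_eq_mul, gsum_erase h0,
    Finset.card_erase_of_mem (mem_univ _), Finset.card_univ, Fintype.card_fin]
  have h1 : ((n - 1 : ℕ) : ℝ) = (n:ℝ) - 1 := by
    have : (1:ℕ) ≤ n := by omega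
    push_cast [this]; ring
  rw [h1]; ring

lemma P_f (x : RW.State n d) :
    ∑ y, RW.P n d x y * ffun n d y = lamc n d * ffun n d x := by
  rw [P_sum hn hd x (ffun n d),
    Finset.sum_congr rfl (fun i (_ : i ∈ univ) => inner_f hn hd x i)]
  have hden := den_pos hn hd
  have hsub : ∑ i : Fin d, (((n:ℝ) - 1) * (ffun n d x - gfun n (x i)) - gfun n (x i))
      = (d:ℝ) * ((n:ℝ) - 1) * ffun n d x - (n:ℝ) * ffun n d x := by
    have : ∀ i : Fin d, ((n:ℝ) - 1) * (ffun n d x - gfun n (x i)) - gfun n (x i)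
        = ((n:ℝ) - 1) * ffun n d x - (n:ℝ) * gfun n (x i) := by intro i; ring
    rw [Finset.sum_congr rfl (fun i _ => this i), Finset.sum_sub_distrib, Finset.sum_const,
      Finset.card_univ, Fintype.card_fin, ← Finset.mul_sum]
    have hf : ∑ i : Fin d, gfun n (x i) = ffun n d x := rfl
    rw [hf, nsmul_eq_mul]
    ring
  rw [hsub]
  have hn1 : (n:ℝ) - 1 ≠ 0 := by
    have : (3:ℝ) ≤ (n:ℝ) := by exact_mod_cast hn
    linarith
  have hd0 : (d:ℝ) ≠ 0 := by
    have : (2:ℝ) ≤ (d:ℝ) := by exact_mod_cast hd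
    linarith
  unfold lamc
  field_simp

lemma inner_fsq (x : RW.State n d) (i : Fin d) :
    ∑ b ∈ univ.erase (x i), (ffun n d (Function.update x i b))^2
      ≤ ((n:ℝ) - 1) * (ffun n d x)^2 - 2 * (n:ℝ) * ffun n d x * gfun n (x i) + ((n:ℝ) - 1) := by
  have h0 : (0:ℕ) < n := by omega
  have hexp : ∀ b ∈ univ.erase (x i), (ffun n d (Function.update x i b))^2
      = (ffun n d x)^2 + 2 * ffun n d x * (gfun n b - gfun n (x i))
        + (gfun n b - gfun n (x i))^2 := by
    intro b _
    rw [ffun_update]; ring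
  rw [Finset.sum_congr rfl hexp]
  have hcard : ((univ.erase (x i)).card : ℝ) = (n:ℝ) - 1 := by
    rw [Finset.card_erase_of_mem (mem_univ _), Finset.card_univ, Fintype.card_fin]
    have : (1:ℕ) ≤ n := by omega
    push_cast [this]; ring
  have hlin : ∑ b ∈ univ.erase (x i), (gfun n b - gfun n (x i))
      = - (n:ℝ) * gfun n (x i) := by
    rw [Finset.sum_sub_distrib, gsum_erase h0, Finset.sum_const, nsmul_eq_mul, hcard]
    ring
  have hsq : ∑ b ∈ univ.erase (x i), (gfun n b - gfun n (x i))^2 ≤ (n:ℝ) - 1 := by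
    calc ∑ b ∈ univ.erase (x i), (gfun n b - gfun n (x i))^2
        ≤ ∑ b ∈ univ.erase (x i), 1 :=
          Finset.sum_le_sum (fun b _ => g_sq_diff_le (x i) b)
      _ = (n:ℝ) - 1 := by rw [Finset.sum_const, nsmul_eq_mul, mul_one, hcard]
  rw [Finset.sum_add_distrib, Finset.sum_add_distrib, Finset.sum_const, nsmul_eq_mul, hcard,
    ← Finset.mul_sum, hlin]
  nlinarith [hsq]

lemma P_fsq (x : RW.State n d) :
    ∑ y, RW.P n d x y * (ffun n d y)^2 ≤ (lamc n d)^2 * (ffun n d x)^2 + 1 := by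
  have hden := den_pos hn hd
  rw [P_sum hn hd x (fun y => (ffun n d y)^2)]
  have hsum : ∑ i : Fin d, ∑ b ∈ univ.erase (x i), (ffun n d (Function.update x i b))^2
      ≤ (d:ℝ) * (((n:ℝ) - 1) * (ffun n d x)^2 + ((n:ℝ) - 1))
        - 2 * (n:ℝ) * (ffun n d x)^2 := by
    calc ∑ i : Fin d, ∑ b ∈ univ.erase (x i), (ffun n d (Function.update x i b))^2
        ≤ ∑ i : Fin d, (((n:ℝ) - 1) * (ffun n d x)^2
            - 2 * (n:ℝ) * ffun n d x * gfun n (x i) + ((n:ℝ) - 1)) :=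
          Finset.sum_le_sum (fun i _ => inner_fsq hn hd x i)
      _ = (d:ℝ) * (((n:ℝ) - 1) * (ffun n d x)^2 + ((n:ℝ) - 1))
            - 2 * (n:ℝ) * (ffun n d x)^2 := by
          have : ∀ i : Fin d, ((n:ℝ) - 1) * (ffun n d x)^2
              - 2 * (n:ℝ) * ffun n d x * gfun n (x i) + ((n:ℝ) - 1)
              = (((n:ℝ) - 1) * (ffun n d x)^2 + ((n:ℝ) - 1))
                - (2 * (n:ℝ) * ffun n d x) * gfun n (x i) := by intro i; ring
          rw [Finset.sum_congr rfl (fun i _ => this i), Finset.sum_sub_distrib,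
            Finset.sum_const, Finset.card_univ, Fintype.card_fin, ← Finset.mul_sum]
          have hf : ∑ i : Fin d, gfun n (x i) = ffun n d x := rfl
          rw [hf, nsmul_eq_mul]
          ring
  have hc : (0:ℝ) < 1/((d:ℝ) * ((n:ℝ) - 1)) := by positivity
  have step : (1/((d:ℝ) * ((n:ℝ) - 1))) *
      (∑ i : Fin d, ∑ b ∈ univ.erase (x i), (ffun n d (Function.update x i b))^2)
      ≤ (1/((d:ℝ) * ((n:ℝ) - 1))) *
        ((d:ℝ) * (((n:ℝ) - 1) * (ffun n d x)^2 + ((n:ℝ) - 1))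
          - 2 * (n:ℝ) * (ffun n d x)^2) := by
    exact mul_le_mul_of_nonneg_left hsum (le_of_lt hc)
  refine le_trans step ?_
  have hrw : (1/((d:ℝ) * ((n:ℝ) - 1))) *
      ((d:ℝ) * (((n:ℝ) - 1) * (ffun n d x)^2 + ((n:ℝ) - 1)) - 2 * (n:ℝ) * (ffun n d x)^2)
      = (2 * lamc n d - 1) * (ffun n d x)^2 + 1 := by
    have hn1 : (n:ℝ) - 1 ≠ 0 := by
      have : (3:ℝ) ≤ (n:ℝ) := by exact_mod_cast hn
      linarith
    have hd0 : (d:ℝ) ≠ 0 := by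
      have : (2:ℝ) ≤ (d:ℝ) := by exact_mod_cast hd
      linarith
    unfold lamc
    field_simp
    ring
  rw [hrw]
  nlinarith [sq_nonneg ((lamc n d - 1) * ffun n d x)]

lemma Pt_nonneg (t : ℕ) (x y : RW.State n d) : 0 ≤ (RW.P n d ^ t) x y := by
  induction t generalizing x y with
  | zero =>
    rw [pow_zero, Matrix.one_apply]
    split <;> norm_num
  | succ t ih =>
    rw [pow_succ, Matrix.mul_apply]
    exact Finset.sum_nonneg fun z _ => mul_nonneg (ih x z) (P_nonneg hn hd z y)

lemma Pt_rowsum (t : ℕ) (x : RW.State n d) : ∑ y, (RW.P n d ^ t) x y = 1 := by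
  induction t generalizing x with
  | zero => simp [Matrix.one_apply]
  | succ t ih =>
    simp only [pow_succ, Matrix.mul_apply]
    rw [Finset.sum_comm]
    calc ∑ z, ∑ y, (RW.P n d ^ t) x z * RW.P n d z y
        = ∑ z, (RW.P n d ^ t) x z * ∑ y, RW.P n d z y := by
          refine Finset.sum_congr rfl fun z _ => ?_
          rw [Finset.mul_sum]
      _ = 1 := by
          rw [Finset.sum_congr rfl (fun z (_ : z ∈ univ) => by rw [P_rowsum hn hd z, mul_one])]
          exact ih x

lemma Pt_f (t : ℕ) (x : RW.State n d) :
    ∑ y, (RW.P n d ^ t) x y * ffun n d y = (lamc n d)^t * ffun n d x := by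
  induction t generalizing x with
  | zero => simp [Matrix.one_apply, Finset.sum_ite_eq, ite_mul]
  | succ t ih =>
    simp only [pow_succ, Matrix.mul_apply]
    calc ∑ y, (∑ z, (RW.P n d ^ t) x z * RW.P n d z y) * ffun n d y
        = ∑ z, (RW.P n d ^ t) x z * ∑ y, RW.P n d z y * ffun n d y := by
          simp only [Finset.sum_mul]
          rw [Finset.sum_comm]
          simp only [Finset.mul_sum]
          exact Finset.sum_congr rfl fun z _ => Finset.sum_congr rfl fun y _ => by ring
      _ = ∑ z, (RW.P n d ^ t) x z * (lamc n d * ffun n d z) := by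
          exact Finset.sum_congr rfl fun z _ => by rw [P_f hn hd z]
      _ = lamc n d * ∑ z, (RW.P n d ^ t) x z * ffun n d z := by
          rw [Finset.mul_sum]
          exact Finset.sum_congr rfl fun z _ => by ring
      _ = (lamc n d)^(t+1) * ffun n d x := by rw [ih x]; ring

lemma Pt_fsq (t : ℕ) (x : RW.State n d) :
    ∑ y, (RW.P n d ^ t) x y * (ffun n d y)^2
      ≤ (lamc n d)^(2*t) * (ffun n d x)^2 + 1/(1 - (lamc n d)^2) := by
  have hl0 := lam_pos hn hd
  have hl1 := lam_lt_one hn hd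
  have hsq1 : (lamc n d)^2 < 1 := by nlinarith
  have hKpos : 0 < 1 - (lamc n d)^2 := by linarith
  induction t generalizing x with
  | zero =>
    simp only [pow_zero, Matrix.one_apply, mul_zero, one_mul, ite_mul, zero_mul]
    rw [Finset.sum_ite_eq]
    simp only [mem_univ, if_true]
    have : 0 < 1/(1 - (lamc n d)^2) := by positivity
    linarith
  | succ t ih =>
    simp only [pow_succ, Matrix.mul_apply]
    calc ∑ y, (∑ z, (RW.P n d ^ t) x z * RW.P n d z y) * (ffun n d y)^2
        = ∑ z, (RW.P n d ^ t) x z * ∑ y, RW.P n d z y * (ffun n d y)^2 := by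
          simp only [Finset.sum_mul]
          rw [Finset.sum_comm]
          simp only [Finset.mul_sum]
          exact Finset.sum_congr rfl fun z _ => Finset.sum_congr rfl fun y _ => by ring
      _ ≤ ∑ z, (RW.P n d ^ t) x z * ((lamc n d)^2 * (ffun n d z)^2 + 1) := by
          refine Finset.sum_le_sum fun z _ => ?_
          exact mul_le_mul_of_nonneg_left (P_fsq hn hd z) (Pt_nonneg hn hd t x z)
      _ = (lamc n d)^2 * (∑ z, (RW.P n d ^ t) x z * (ffun n d z)^2) + 1 := by
          rw [Finset.sum_congr rfl (fun z (_ : z ∈ univ) => by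
            show (RW.P n d ^ t) x z * ((lamc n d)^2 * (ffun n d z)^2 + 1)
              = (lamc n d)^2 * ((RW.P n d ^ t) x z * (ffun n d z)^2) + (RW.P n d ^ t) x z
            ring)]
          rw [Finset.sum_add_distrib, ← Finset.mul_sum, Pt_rowsum hn hd t x]
      _ ≤ (lamc n d)^2 * ((lamc n d)^(2*t) * (ffun n d x)^2 + 1/(1 - (lamc n d)^2)) + 1 := by
          have hsqnn : (0:ℝ) ≤ (lamc n d)^2 := sq_nonneg _
          have := mul_le_mul_of_nonneg_left (ih x) hsqnn
          linarith
      _ = (lamc n d)^(2*(t+1)) * (ffun n d x)^2 + 1/(1 - (lamc n d)^2) := by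
          have : (lamc n d)^2 * (1/(1 - (lamc n d)^2)) + 1 = 1/(1 - (lamc n d)^2) := by
            field_simp
            ring
          have hpow : lamc n d ^ (2*(t+1)) = lamc n d ^2 * lamc n d ^(2*t) := by ring
          rw [mul_add, ← mul_assoc, hpow]
          linarith [this]


lemma sum_f_zero : ∑ y : RW.State n d, ffun n d y = 0 := by
  have hl1 := lam_lt_one hn hd
  have key : ∑ y : RW.State n d, ffun n d y = lamc n d * ∑ y : RW.State n d, ffun n d y := by
    calc ∑ y : RW.State n d, ffun n d y
        = ∑ y : RW.State n d, (∑ x, RW.P n d x y) * ffun n d y := by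
          refine Finset.sum_congr rfl fun y _ => ?_
          rw [P_colsum hn hd y, one_mul]
      _ = ∑ x, ∑ y, RW.P n d x y * ffun n d y := by
          simp only [Finset.sum_mul]
          rw [Finset.sum_comm]
      _ = ∑ x : RW.State n d, lamc n d * ffun n d x := by
          refine Finset.sum_congr rfl fun x _ => ?_
          rw [P_f hn hd x]
      _ = lamc n d * ∑ y : RW.State n d, ffun n d y := by rw [Finset.mul_sum]
  nlinarith [key]

lemma sum_fsq_le :
    ∑ y : RW.State n d, (ffun n d y)^2
      ≤ (n:ℝ)^d / (1 - (lamc n d)^2) := by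
  have hl0 := lam_pos hn hd
  have hl1 := lam_lt_one hn hd
  have hKpos : 0 < 1 - (lamc n d)^2 := by nlinarith
  have hcard : (Fintype.card (RW.State n d) : ℝ) = (n:ℝ)^d := by
    rw [show Fintype.card (RW.State n d) = n^d by simp [RW.State]]
    push_cast; ring
  have key : ∑ y : RW.State n d, (ffun n d y)^2
      ≤ (lamc n d)^2 * ∑ y : RW.State n d, (ffun n d y)^2 + (n:ℝ)^d := by
    calc ∑ y : RW.State n d, (ffun n d y)^2
        = ∑ y : RW.State n d, (∑ x, RW.P n d x y) * (ffun n d y)^2 := by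
          refine Finset.sum_congr rfl fun y _ => ?_
          rw [P_colsum hn hd y, one_mul]
      _ = ∑ x, ∑ y, RW.P n d x y * (ffun n d y)^2 := by
          simp only [Finset.sum_mul]
          rw [Finset.sum_comm]
      _ ≤ ∑ x : RW.State n d, ((lamc n d)^2 * (ffun n d x)^2 + 1) :=
          Finset.sum_le_sum fun x _ => P_fsq hn hd x
      _ = (lamc n d)^2 * ∑ y : RW.State n d, (ffun n d y)^2 + (n:ℝ)^d := by
          rw [Finset.sum_add_distrib, Finset.sum_const, ← Finset.mul_sum, Finset.card_univ,
            nsmul_eq_mul, mul_one, hcard]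
  rw [le_div_iff₀ hKpos]
  nlinarith [key]


set_option maxHeartbeats 2000000 in
/-- Chebyshev-based lower bound on distance to stationarity -/
lemma dist_lower (t : ℕ) :
    1 - 8 / (((d:ℝ) * ((n:ℝ) - 1) / (n:ℝ)) * (lamc n d)^(2*t)) ≤ RW.dist n d t := by
  have hl0 := lam_pos hn hd
  have hl1 := lam_lt_one hn hd
  have hnR : (3:ℝ) ≤ (n:ℝ) := by exact_mod_cast hn
  have hdR : (2:ℝ) ≤ (d:ℝ) := by exact_mod_cast hd
  have hden := den_pos hn hd
  set r : ℝ := (d:ℝ) * ((n:ℝ) - 1) / (n:ℝ) with hr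
  have hrpos : 0 < r := by positivity
  set lam := lamc n d with hlam
  set μ : RW.State n d → ℝ := (RW.P n d ^ t) (x0 n d hn) with hμdef
  set m : ℝ := lam^t * r with hm
  have hmpos : 0 < m := by positivity
  have hKpos : 0 < 1 - lam^2 := by nlinarith
  have hKler : 1/(1 - lam^2) ≤ r := by
    have h1r : 1 - lam = 1/r := by
      rw [hlam]; unfold lamc
      rw [hr]
      field_simp
      ring
    rw [div_le_iff₀ hKpos]
    have : 1 - lam ≤ 1 - lam^2 := by nlinarith
    calc (1:ℝ) = r * (1 - lam) := by rw [h1r]; field_simp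
      _ ≤ r * (1 - lam^2) := by nlinarith
  -- basic facts about μ
  have hμ0 : ∀ y, 0 ≤ μ y := fun y => Pt_nonneg hn hd t _ y
  have hμ1 : ∑ y, μ y = 1 := Pt_rowsum hn hd t _
  have hμf : ∑ y, μ y * ffun n d y = m := by
    rw [hμdef, Pt_f hn hd t, ffun_x0 hn, hm]
  have hμf2 : ∑ y, μ y * (ffun n d y)^2 ≤ m^2 + r := by
    have := Pt_fsq hn hd t (x0 n d hn)
    rw [ffun_x0 hn] at this
    have hpow : lam^(2*t) * r^2 = m^2 := by rw [hm]; ring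
    calc ∑ y, μ y * (ffun n d y)^2 ≤ lam^(2*t) * r^2 + 1/(1 - lam^2) := this
      _ ≤ m^2 + r := by rw [hpow]; linarith
  -- π facts
  have hπ0 : ∀ y : RW.State n d, 0 ≤ RW.pi n d y := by
    intro y; unfold RW.pi; positivity
  have hπ1 : ∑ y : RW.State n d, RW.pi n d y = 1 := by
    unfold RW.pi
    rw [Finset.sum_const, Finset.card_univ, nsmul_eq_mul,
      show Fintype.card (RW.State n d) = n^d by simp [RW.State]]
    have : ((n:ℝ))^d ≠ 0 := by positivity
    push_cast
    field_simp
  have hπf2 : ∑ y, RW.pi n d y * (ffun n d y)^2 ≤ r := by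
    unfold RW.pi
    have h1 : ∑ y : RW.State n d, 1/(n:ℝ)^d * (ffun n d y)^2
        = ((n:ℝ)^d)⁻¹ * ∑ y : RW.State n d, (ffun n d y)^2 := by
      rw [Finset.mul_sum]
      exact Finset.sum_congr rfl fun y _ => by ring
    rw [h1]
    have h2 := sum_fsq_le hn hd
    have hnd : (0:ℝ) < (n:ℝ)^d := by positivity
    calc ((n:ℝ)^d)⁻¹ * ∑ y : RW.State n d, (ffun n d y)^2
        ≤ ((n:ℝ)^d)⁻¹ * ((n:ℝ)^d / (1 - lam^2)) := by
          exact mul_le_mul_of_nonneg_left h2 (by positivity)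
      _ = 1/(1 - lam^2) := by field_simp
      _ ≤ r := hKler
  -- the distinguishing set
  set A : Finset (RW.State n d) := {y | m/2 < ffun n d y} with hA
  have hAc : ∀ y, y ∈ Aᶜ ↔ ffun n d y ≤ m/2 := by
    intro y
    rw [Finset.mem_compl, hA]
    simp only [mem_filter, mem_univ, true_and]
    exact not_lt
  -- μ of complement is small
  have hμAc : ∑ y ∈ Aᶜ, μ y ≤ 4 * r / m^2 := by
    have hsm : ∑ y, μ y * (m - ffun n d y)^2 ≤ r := by
      have expand : ∀ y, μ y * (m - ffun n d y)^2
          = m^2 * μ y - 2*m*(μ y * ffun n d y) + μ y * (ffun n d y)^2 := by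
        intro y; ring
      rw [Finset.sum_congr rfl fun y _ => expand y]
      rw [Finset.sum_add_distrib, Finset.sum_sub_distrib, ← Finset.mul_sum, ← Finset.mul_sum,
        hμ1, hμf, mul_one]
      linarith [hμf2]
    have step : ∀ y ∈ Aᶜ, μ y ≤ (4/m^2) * (μ y * (m - ffun n d y)^2) := by
      intro y hy
      rw [hAc] at hy
      have h1 : m/2 ≤ m - ffun n d y := by linarith
      have h2 : m^2/4 ≤ (m - ffun n d y)^2 := by nlinarith
      have h3 := hμ0 y
      have h4 : μ y * (m^2/4) ≤ μ y * (m - ffun n d y)^2 :=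
        mul_le_mul_of_nonneg_left h2 h3
      have hm2 : (0:ℝ) < m^2 := by positivity
      calc μ y = (4/m^2) * (μ y * (m^2/4)) := by field_simp
        _ ≤ (4/m^2) * (μ y * (m - ffun n d y)^2) :=
            mul_le_mul_of_nonneg_left h4 (by positivity)
    calc ∑ y ∈ Aᶜ, μ y ≤ ∑ y ∈ Aᶜ, (4/m^2) * (μ y * (m - ffun n d y)^2) :=
          Finset.sum_le_sum step
      _ ≤ ∑ y, (4/m^2) * (μ y * (m - ffun n d y)^2) := by
          refine Finset.sum_le_sum_of_subset_of_nonneg (Finset.subset_univ _) ?_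
          intro y _ _
          have := hμ0 y
          positivity
      _ = (4/m^2) * ∑ y, μ y * (m - ffun n d y)^2 := by rw [Finset.mul_sum]
      _ ≤ (4/m^2) * r := by
          exact mul_le_mul_of_nonneg_left hsm (by positivity)
      _ = 4 * r / m^2 := by ring
  -- π of the set is small
  have hπA : ∑ y ∈ A, RW.pi n d y ≤ 4 * r / m^2 := by
    have step : ∀ y ∈ A, RW.pi n d y ≤ (4/m^2) * (RW.pi n d y * (ffun n d y)^2) := by
      intro y hy
      rw [hA] at hy
      simp only [mem_filter, mem_univ, true_and] at hy
      have h2 : m^2/4 ≤ (ffun n d y)^2 := by nlinarith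
      have h3 := hπ0 y
      have h4 : RW.pi n d y * (m^2/4) ≤ RW.pi n d y * (ffun n d y)^2 :=
        mul_le_mul_of_nonneg_left h2 h3
      have hm2 : (0:ℝ) < m^2 := by positivity
      calc RW.pi n d y = (4/m^2) * (RW.pi n d y * (m^2/4)) := by field_simp
        _ ≤ (4/m^2) * (RW.pi n d y * (ffun n d y)^2) :=
            mul_le_mul_of_nonneg_left h4 (by positivity)
    calc ∑ y ∈ A, RW.pi n d y ≤ ∑ y ∈ A, (4/m^2) * (RW.pi n d y * (ffun n d y)^2) :=
          Finset.sum_le_sum step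
      _ ≤ ∑ y, (4/m^2) * (RW.pi n d y * (ffun n d y)^2) := by
          refine Finset.sum_le_sum_of_subset_of_nonneg (Finset.subset_univ _) ?_
          intro y _ _
          have := hπ0 y
          positivity
      _ = (4/m^2) * ∑ y, RW.pi n d y * (ffun n d y)^2 := by rw [Finset.mul_sum]
      _ ≤ (4/m^2) * r := mul_le_mul_of_nonneg_left hπf2 (by positivity)
      _ = 4 * r / m^2 := by ring
  -- combine into a TV lower bound
  have hμA : 1 - 4 * r / m^2 ≤ ∑ y ∈ A, μ y := by
    have := Finset.sum_add_sum_compl A μ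
    rw [hμ1] at this  -- wrong direction? sum_add_sum_compl gives = total
    linarith [hμAc]
  have htv : 1 - 8 * r / m^2 ≤ tv μ (RW.pi n d) := by
    have h := tv_ge_diff μ (RW.pi n d) hμ1 hπ1 A
    have h8 : 8 * r / m^2 = 4 * r / m^2 + 4 * r / m^2 := by ring
    linarith
  have hsup0 : tv ((RW.P n d ^ t) (x0 n d hn)) (RW.pi n d) ≤ RW.dist n d t := by
    unfold RW.dist
    exact le_ciSup (f := fun x => tv ((RW.P n d ^ t) x) (RW.pi n d))
      (Set.Finite.bddAbove (Set.finite_range _)) (x0 n d hn)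
  have hsup : tv μ (RW.pi n d) ≤ RW.dist n d t := hsup0
  have hfin : 1 - 8 / (r * lam^(2*t)) = 1 - 8 * r / m^2 := by
    rw [hm]
    have h1 : (lam^t * r)^2 = lam^(2*t) * r^2 := by ring
    rw [h1]
    have hp1 : (0:ℝ) < r * lam^(2*t) := mul_pos hrpos (pow_pos hl0 _)
    have hp2 : (0:ℝ) < lam^(2*t) * r^2 := mul_pos (pow_pos hl0 _) (pow_pos hrpos 2)
    have h2 : 8 / (r * lam^(2*t)) = 8 * r / (lam^(2*t) * r^2) := by
      rw [div_eq_div_iff hp1.ne' hp2.ne']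
      ring
    rw [h2]
  rw [hfin]
  linarith

lemma hamdist_le_d (x y : RW.State n d) : hammingDist x y ≤ d := by
  calc hammingDist x y ≤ Fintype.card (Fin d) := hammingDist_le_card_fintype
    _ = d := Fintype.card_fin d

lemma P_pos_of_dist_one (x y : RW.State n d) (h : hammingDist x y = 1) :
    0 < RW.P n d x y := by
  have hden := den_pos hn hd
  simp only [RW.P, Matrix.of_apply, h, if_true]
  positivity

lemma Psq_pos (x y : RW.State n d) (h : hammingDist x y ≤ 2) :
    0 < (RW.P n d ^ 2) x y := by
  have hstep : ∀ z : RW.State n d, hammingDist x z = 1 → hammingDist z y = 1 →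
      0 < (RW.P n d ^ 2) x y := by
    intro z h1 h2
    rw [pow_two, Matrix.mul_apply]
    have hterm : 0 < RW.P n d x z * RW.P n d z y :=
      mul_pos (P_pos_of_dist_one hn hd x z h1) (P_pos_of_dist_one hn hd z y h2)
    refine lt_of_lt_of_le hterm ?_
    exact Finset.single_le_sum
      (fun w _ => mul_nonneg (P_nonneg hn hd x w) (P_nonneg hn hd w y)) (mem_univ z)
  interval_cases hdist : hammingDist x y
  · -- distance 0 : x = y
    have hxy : x = y := hammingDist_eq_zero.1 hdist
    subst hxy
    have hcard : 1 < Fintype.card (Fin n) := by rw [Fintype.card_fin]; omega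
    have hd0 : 0 < d := by omega
    obtain ⟨b, hb⟩ := Fintype.exists_ne_of_one_lt_card hcard (x ⟨0, hd0⟩)
    refine hstep (Function.update x ⟨0, hd0⟩ b) (ham_update_eq_one x _ b hb) ?_
    rw [hammingDist_comm]
    exact ham_update_eq_one x _ b hb
  · -- distance 1
    obtain ⟨i, b, hb, rfl⟩ := (ham_eq_one_iff x y).1 hdist
    have hcard : 2 < Fintype.card (Fin n) := by rw [Fintype.card_fin]; omega
    have : (({x i, b} : Finset (Fin n))ᶜ).Nonempty := by
      rw [← Finset.card_pos, Finset.card_compl]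
      have h2 : ({x i, b} : Finset (Fin n)).card ≤ 2 := Finset.card_insert_le _ _ |>.trans (by simp)
      rw [Fintype.card_fin]
      omega
    obtain ⟨c, hc⟩ := this
    rw [Finset.mem_compl, Finset.mem_insert, Finset.mem_singleton] at hc
    push_neg at hc
    refine hstep (Function.update x i c) (ham_update_eq_one x i c hc.1) ?_
    have hre : Function.update x i b = Function.update (Function.update x i c) i b := by
      rw [Function.update_idem]
    rw [hre]
    refine ham_update_eq_one _ i b ?_
    rw [Function.update_self]
    exact fun h => hc.2 h.symm
  · -- distance 2
    have hne : x ≠ y := by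
      intro h; subst h; simp at hdist
    obtain ⟨i, hi⟩ := Function.ne_iff.1 hne
    have hred := ham_update_reduce x y i hi
    refine hstep (Function.update x i (y i)) (ham_update_eq_one x i (y i) (Ne.symm hi)) ?_
    omega

lemma Ppow_pos (k : ℕ) (x y : RW.State n d) (h : hammingDist x y ≤ k + 1) :
    0 < (RW.P n d ^ (2 * (k + 1))) x y := by
  induction k generalizing x y with
  | zero => exact Psq_pos hn hd x y (by omega)
  | succ k ih =>
    have hsplit : RW.P n d ^ (2 * (k + 2)) = RW.P n d ^ 2 * RW.P n d ^ (2 * (k + 1)) := by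
      rw [← pow_add]
      ring_nf
    have hstep : ∀ z : RW.State n d, hammingDist x z ≤ 2 → hammingDist z y ≤ k + 1 →
        0 < (RW.P n d ^ (2 * (k + 2))) x y := by
      intro z h1 h2
      rw [hsplit, Matrix.mul_apply]
      have hterm : 0 < (RW.P n d ^ 2) x z * (RW.P n d ^ (2 * (k + 1))) z y :=
        mul_pos (Psq_pos hn hd x z h1) (ih z y h2)
      refine lt_of_lt_of_le hterm ?_
      exact Finset.single_le_sum
        (fun w _ => mul_nonneg (Pt_nonneg hn hd 2 x w) (Pt_nonneg hn hd _ w y)) (mem_univ z)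
    by_cases hcase : hammingDist x y ≤ k + 1
    · exact hstep x (by simp) hcase
    · have hxy : x ≠ y := by
        intro h; subst h; simp at hcase
      obtain ⟨i, hi⟩ := Function.ne_iff.1 hxy
      have hred := ham_update_reduce x y i hi
      have h1 : hammingDist x (Function.update x i (y i)) = 1 :=
        ham_update_eq_one x i (y i) (Ne.symm hi)
      exact hstep (Function.update x i (y i)) (by omega) (by omega)

lemma Pd_pos (x y : RW.State n d) : 0 < (RW.P n d ^ (2 * d)) x y := by
  have hd0 : d = (d - 1) + 1 := by omega
  have := Ppow_pos hn hd (d - 1) x y (by have := hamdist_le_d hn hd x y; omega)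
  rwa [← hd0] at this

lemma Pt_colsum (t : ℕ) (y : RW.State n d) : ∑ x, (RW.P n d ^ t) x y = 1 := by
  induction t generalizing y with
  | zero => simp [Matrix.one_apply]
  | succ t ih =>
    simp only [pow_succ, Matrix.mul_apply]
    rw [Finset.sum_comm]
    calc ∑ z, ∑ x, (RW.P n d ^ t) x z * RW.P n d z y
        = ∑ z, (∑ x, (RW.P n d ^ t) x z) * RW.P n d z y := by
          refine Finset.sum_congr rfl fun z _ => ?_
          rw [Finset.sum_mul]
      _ = ∑ z, RW.P n d z y := by
          refine Finset.sum_congr rfl fun z _ => ?_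
          rw [ih z, one_mul]
      _ = 1 := P_colsum hn hd y

end Aux

/-- Doeblin-type one-step contraction. -/
lemma doeblin {S : Type*} [Fintype S] (K : Matrix S S ℝ) (δ : ℝ) (hδ0 : 0 ≤ δ)
    (hδ : ∀ x y, δ ≤ K x y) (hrow : ∀ x, ∑ y, K x y = 1)
    (ν : S → ℝ) (hν : ∑ z, ν z = 0) :
    ∑ y, |∑ z, ν z * K z y| ≤ (1 - (Fintype.card S : ℝ) * δ) * ∑ z, |ν z| := by
  have key : ∀ y, |∑ z, ν z * K z y| ≤ ∑ z, |ν z| * (K z y - δ) := by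
    intro y
    have h1 : ∑ z, ν z * K z y = ∑ z, ν z * (K z y - δ) := by
      have : ∑ z, ν z * (K z y - δ) = ∑ z, ν z * K z y - δ * ∑ z, ν z := by
        rw [Finset.mul_sum, ← Finset.sum_sub_distrib]
        exact Finset.sum_congr rfl fun z _ => by ring
      rw [this, hν, mul_zero, sub_zero]
    rw [h1]
    refine (Finset.abs_sum_le_sum_abs _ _).trans ?_
    refine Finset.sum_le_sum fun z _ => ?_
    rw [abs_mul, abs_of_nonneg (sub_nonneg.2 (hδ z y))]
  calc ∑ y, |∑ z, ν z * K z y| ≤ ∑ y, ∑ z, |ν z| * (K z y - δ) :=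
        Finset.sum_le_sum fun y _ => key y
    _ = ∑ z, |ν z| * ∑ y, (K z y - δ) := by
        rw [Finset.sum_comm]
        exact Finset.sum_congr rfl fun z _ => by rw [Finset.mul_sum]
    _ = ∑ z, |ν z| * (1 - (Fintype.card S : ℝ) * δ) := by
        refine Finset.sum_congr rfl fun z _ => ?_
        rw [Finset.sum_sub_distrib, hrow z, Finset.sum_const, Finset.card_univ, nsmul_eq_mul]
    _ = (1 - (Fintype.card S : ℝ) * δ) * ∑ z, |ν z| := by
        rw [← Finset.sum_mul, mul_comm]

section Aux2
variable {n d : ℕ} (hn : 3 ≤ n) (hd : 2 ≤ d)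
include hn hd

lemma mix_exists (ε : ℝ) (hε : 0 < ε) : ∃ t : ℕ, RW.dist n d t ≤ ε := by
  have hst : Nonempty (RW.State n d) := ⟨x0 n d hn⟩
  have hcard0 : 0 < (Fintype.card (RW.State n d) : ℝ) := by
    have := Fintype.card_pos_iff.2 hst
    exact_mod_cast this
  -- the minorization constant
  obtain ⟨p, -, hmin⟩ := Finset.exists_min_image (univ ×ˢ univ)
    (fun p : RW.State n d × RW.State n d => (RW.P n d ^ (2 * d)) p.1 p.2)
    ⟨(x0 n d hn, x0 n d hn), by simp⟩
  set δ : ℝ := (RW.P n d ^ (2 * d)) p.1 p.2 with hδdef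
  have hδpos : 0 < δ := Pd_pos hn hd p.1 p.2
  have hδle : ∀ x y : RW.State n d, δ ≤ (RW.P n d ^ (2 * d)) x y := by
    intro x y
    exact hmin (x, y) (by simp)
  set N : ℝ := (Fintype.card (RW.State n d) : ℝ) with hNdef
  have hNδ : N * δ ≤ 1 := by
    calc N * δ = ∑ _y : RW.State n d, δ := by
          rw [Finset.sum_const, Finset.card_univ, nsmul_eq_mul]
      _ ≤ ∑ y, (RW.P n d ^ (2 * d)) (x0 n d hn) y :=
          Finset.sum_le_sum fun y _ => hδle _ y
      _ = 1 := Pt_rowsum hn hd (2 * d) _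
  have hbase0 : 0 ≤ 1 - N * δ := by linarith
  have hbase1 : 1 - N * δ < 1 := by nlinarith
  have hπ1 : ∑ y : RW.State n d, RW.pi n d y = 1 := by
    unfold RW.pi
    rw [Finset.sum_const, Finset.card_univ, nsmul_eq_mul,
      show Fintype.card (RW.State n d) = n^d by simp [RW.State]]
    have : ((n:ℝ))^d ≠ 0 := by positivity
    push_cast
    field_simp
  -- iterated contraction
  have key : ∀ m : ℕ, ∀ x : RW.State n d,
      ∑ y, |(RW.P n d ^ (2 * d * m)) x y - RW.pi n d y| ≤ 2 * (1 - N * δ)^m := by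
    intro m
    induction m with
    | zero =>
      intro x
      simp only [Nat.mul_zero, pow_zero, Matrix.one_apply, mul_one]
      calc ∑ y, |(if x = y then (1:ℝ) else 0) - RW.pi n d y|
          ≤ ∑ y : RW.State n d, ((if x = y then (1:ℝ) else 0) + RW.pi n d y) := by
            refine Finset.sum_le_sum fun y _ => ?_
            have h1 : (0:ℝ) ≤ (if x = y then (1:ℝ) else 0) := by split <;> norm_num
            have h2 : (0:ℝ) ≤ RW.pi n d y := by unfold RW.pi; positivity
            rw [abs_sub_comm]
            calc |RW.pi n d y - (if x = y then (1:ℝ) else 0)|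
                ≤ |RW.pi n d y| + |(if x = y then (1:ℝ) else 0)| := abs_sub _ _
              _ = (if x = y then (1:ℝ) else 0) + RW.pi n d y := by
                  rw [abs_of_nonneg h1, abs_of_nonneg h2]; ring
        _ = 2 := by
            rw [Finset.sum_add_distrib, hπ1, Finset.sum_ite_eq]
            simp
            norm_num
    | succ m ih =>
      intro x
      have hsplit : RW.P n d ^ (2 * d * (m + 1)) = RW.P n d ^ (2 * d * m) * RW.P n d ^ (2 * d) := by
        rw [← pow_add]
        ring_nf
      have hrewrite : ∀ y, (RW.P n d ^ (2 * d * (m + 1))) x y - RW.pi n d y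
          = ∑ z, ((RW.P n d ^ (2 * d * m)) x z - RW.pi n d z) * (RW.P n d ^ (2 * d)) z y := by
        intro y
        have hπQ : ∑ z, RW.pi n d z * (RW.P n d ^ (2 * d)) z y = RW.pi n d y := by
          unfold RW.pi
          rw [← Finset.mul_sum, Pt_colsum hn hd (2 * d) y, mul_one]
        rw [hsplit, Matrix.mul_apply, ← hπQ, ← Finset.sum_sub_distrib]
        exact Finset.sum_congr rfl fun z _ => by ring
      have hνsum : ∑ z, ((RW.P n d ^ (2 * d * m)) x z - RW.pi n d z) = 0 := by
        rw [Finset.sum_sub_distrib, Pt_rowsum hn hd (2 * d * m) x, hπ1, sub_self]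
      calc ∑ y, |(RW.P n d ^ (2 * d * (m + 1))) x y - RW.pi n d y|
          = ∑ y, |∑ z, ((RW.P n d ^ (2 * d * m)) x z - RW.pi n d z) * (RW.P n d ^ (2 * d)) z y| := by
            exact Finset.sum_congr rfl fun y _ => by rw [hrewrite y]
        _ ≤ (1 - N * δ) * ∑ z, |(RW.P n d ^ (2 * d * m)) x z - RW.pi n d z| :=
            doeblin (RW.P n d ^ (2 * d)) δ hδpos.le hδle (Pt_rowsum hn hd (2 * d)) _ hνsum
        _ ≤ (1 - N * δ) * (2 * (1 - N * δ)^m) :=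
            mul_le_mul_of_nonneg_left (ih x) hbase0
        _ = 2 * (1 - N * δ)^(m + 1) := by ring
  -- choose m so that the bound is below ε
  obtain ⟨m, hm⟩ := exists_pow_lt_of_lt_one hε hbase1
  refine ⟨2 * d * m, ?_⟩
  unfold RW.dist
  refine ciSup_le fun x => ?_
  unfold tv
  have := key m x
  linarith

lemma tmix_set_nonempty (ε : ℝ) (hε : 0 < ε) :
    {t : ℕ | RW.dist n d t ≤ ε}.Nonempty := by
  obtain ⟨t, ht⟩ := mix_exists hn hd ε hε
  exact ⟨t, ht⟩

end Aux2

set_option maxHeartbeats 1000000 in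
theorem rook_walk_cutoff_lower :
    ∃ cl : ℝ → ℝ, ∀ n d : ℕ, 3 ≤ n → 2 ≤ d → ∀ ε : ℝ, 0 < ε → ε < 1 →
      ((d : ℝ) * ((n : ℝ) - 1) / (2 * (n : ℝ))) * Real.log (d : ℝ) +
          cl ε * ((d : ℝ) * ((n : ℝ) - 1) / (n : ℝ)) ≤ (RW.tmix n d ε : ℝ) := by
  refine ⟨fun ε => Real.log ((1 - ε) / 12) / 2 - 3/4, ?_⟩
  intro n d hn hd ε hε0 hε1
  dsimp only
  have hnR : (3:ℝ) ≤ (n:ℝ) := by exact_mod_cast hn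
  have hdR : (2:ℝ) ≤ (d:ℝ) := by exact_mod_cast hd
  have hnpos : (0:ℝ) < (n:ℝ) := by linarith
  have hdpos : (0:ℝ) < (d:ℝ) := by linarith
  have hden : (0:ℝ) < (d:ℝ) * ((n:ℝ) - 1) := den_pos hn hd
  have hcoef : (d:ℝ) * ((n:ℝ) - 1) / (2 * (n:ℝ)) = ((d:ℝ) * ((n:ℝ) - 1) / (n:ℝ)) / 2 := by
    rw [div_div, mul_comm (n:ℝ) (2:ℝ)]
  rw [hcoef]
  set r : ℝ := (d:ℝ) * ((n:ℝ) - 1) / (n:ℝ) with hr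
  set L' : ℝ := Real.log ((1 - ε) / 12) with hL'
  have hrpos : 0 < r := by rw [hr]; positivity
  have hrd : (2/3) * (d:ℝ) ≤ r := by
    rw [hr, le_div_iff₀ hnpos]
    nlinarith
  have hr1 : 1 ≤ r := by nlinarith
  have hl0 : 0 < lamc n d := lam_pos hn hd
  have hl1 : lamc n d < 1 := lam_lt_one hn hd
  have h1mlam : 1 - lamc n d = 1/r := by
    unfold lamc
    rw [hr]
    field_simp
    ring
  have h1e : 0 < 1 - ε := by linarith
  have hL'neg : L' ≤ 0 := Real.log_nonpos (by positivity) (by nlinarith)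
  have hL'eq : L' = Real.log (1 - ε) - Real.log 12 :=
    Real.log_div h1e.ne' (by norm_num)
  have hlogd0 : 0 ≤ Real.log (d:ℝ) := Real.log_nonneg (by linarith)
  have hlogd : Real.log (d:ℝ) ≤ (3/2) * r := by
    have h1 : Real.log (d:ℝ) ≤ (d:ℝ) - 1 := Real.log_le_sub_one_of_pos hdpos
    linarith
  set t0 := RW.tmix n d ε with ht0def
  have ht0nn : (0:ℝ) ≤ (t0:ℝ) := Nat.cast_nonneg _
  by_cases hcase : 8 ≤ r * (1 - ε)
  · -- main case: use the Chebyshev lower bound on the distance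
    have hmem : RW.dist n d t0 ≤ ε := Nat.sInf_mem (tmix_set_nonempty hn hd ε hε0)
    have hdistlow := dist_lower hn hd t0
    rw [← hr] at hdistlow
    have hεbound : 1 - 8 / (r * lamc n d ^ (2 * t0)) ≤ ε := le_trans hdistlow hmem
    have hlampos : 0 < lamc n d ^ (2 * t0) := pow_pos hl0 _
    have hrl : 0 < r * lamc n d ^ (2 * t0) := mul_pos hrpos hlampos
    have h8 : (1 - ε) * (r * lamc n d ^ (2 * t0)) ≤ 8 := by
      rw [← le_div_iff₀ hrl]
      linarith
    have hrε : 0 < r * (1 - ε) := mul_pos hrpos h1e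
    have hlam2 : lamc n d ^ (2 * t0) ≤ 8 / (r * (1 - ε)) := by
      rw [le_div_iff₀ hrε]
      nlinarith [h8]
    have hloglam : Real.log (lamc n d ^ (2 * t0)) ≤ Real.log (8 / (r * (1 - ε))) :=
      Real.log_le_log hlampos hlam2
    rw [Real.log_pow] at hloglam
    push_cast at hloglam
    set B : ℝ := Real.log (r * (1 - ε) / 8) with hB
    have hlogdiv : Real.log (8 / (r * (1 - ε))) = -B := by
      rw [hB, ← Real.log_inv]
      congr 1
      field_simp
    rw [hlogdiv] at hloglam
    have hB0 : 0 ≤ B := Real.log_nonneg (by rw [le_div_iff₀ (by norm_num : (0:ℝ) < 8)]; linarith)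
    set a : ℝ := -Real.log (lamc n d) with ha
    have hapos : 0 < a := by
      have := Real.log_neg hl0 hl1
      rw [ha]; linarith
    have hi : B ≤ 2 * (t0:ℝ) * a := by
      have : 2 * (t0:ℝ) * Real.log (lamc n d) ≤ -B := hloglam
      rw [ha]; linarith
    have ha_le : a ≤ 1 / (r * lamc n d) := by
      have h2 : Real.log (lamc n d)⁻¹ ≤ (lamc n d)⁻¹ - 1 :=
        Real.log_le_sub_one_of_pos (inv_pos.2 hl0)
      rw [Real.log_inv] at h2
      have h3 : (lamc n d)⁻¹ - 1 = 1 / (r * lamc n d) := by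
        have e1 : (lamc n d)⁻¹ - 1 = (1 - lamc n d) / lamc n d := by
          field_simp
        rw [e1, h1mlam, div_div]
      rw [ha]; linarith
    have hrlam : r * lamc n d = r - 1 := by
      have e1 : lamc n d = 1 - 1/r := by linarith [h1mlam]
      rw [e1, mul_sub, mul_one, mul_one_div, div_self hrpos.ne']
    have hrlampos : 0 < r * lamc n d := mul_pos hrpos hl0
    have ht0ge : (r - 1) * B / 2 ≤ (t0:ℝ) := by
      have s1 : B * (r * lamc n d) ≤ (2 * (t0:ℝ) * a) * (r * lamc n d) :=
        mul_le_mul_of_nonneg_right hi hrlampos.le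
      have s2 : a * (r * lamc n d) ≤ 1 := by
        rw [← le_div_iff₀ hrlampos] at *
        exact ha_le
      have s4 : (2 * (t0:ℝ) * a) * (r * lamc n d) ≤ 2 * (t0:ℝ) := by
        have : (2 * (t0:ℝ) * a) * (r * lamc n d) = 2 * (t0:ℝ) * (a * (r * lamc n d)) := by ring
        rw [this]
        nlinarith [ht0nn, s2]
      rw [hrlam] at s1
      nlinarith [s1, s4]
    have hBge : Real.log (d:ℝ) + L' ≤ B := by
      have hlogr : Real.log ((2/3) * (d:ℝ)) ≤ Real.log r :=
        Real.log_le_log (by positivity) hrd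
      rw [Real.log_mul (by norm_num) hdpos.ne'] at hlogr
      have hBexp : B = Real.log r + Real.log (1 - ε) - Real.log 8 := by
        rw [hB, Real.log_div (by positivity) (by norm_num),
          Real.log_mul hrpos.ne' h1e.ne']
      have h23 : Real.log ((2:ℝ)/3) - Real.log 8 = -Real.log 12 := by
        have he : ((2:ℝ)/3) / 8 = (12:ℝ)⁻¹ := by norm_num
        have := Real.log_div (by norm_num : ((2:ℝ)/3) ≠ 0) (by norm_num : (8:ℝ) ≠ 0)
        rw [he, Real.log_inv] at this
        linarith
      rw [hBexp, hL'eq]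
      linarith
    have hm : (r - 1) * (Real.log (d:ℝ) + L') ≤ (r - 1) * B :=
      mul_le_mul_of_nonneg_left hBge (by linarith)
    have hexp : (r - 1) * (Real.log (d:ℝ) + L') / 2
        = (r * Real.log (d:ℝ)) / 2 + (r * L') / 2 - Real.log (d:ℝ) / 2 - L' / 2 := by
      ring
    have hgoal2 : r / 2 * Real.log (d:ℝ) + (L' / 2 - 3/4) * r
        ≤ (r - 1) * (Real.log (d:ℝ) + L') / 2 := by
      rw [hexp]
      have e1 : r / 2 * Real.log (d:ℝ) = (r * Real.log (d:ℝ)) / 2 := by ring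
      have e2 : (L' / 2 - 3/4) * r = (r * L') / 2 - (3/4) * r := by ring
      rw [e1, e2]
      linarith
    calc r / 2 * Real.log (d:ℝ) + (Real.log ((1 - ε) / 12) / 2 - 3/4) * r
        = r / 2 * Real.log (d:ℝ) + (L' / 2 - 3/4) * r := by rw [← hL']
      _ ≤ (r - 1) * (Real.log (d:ℝ) + L') / 2 := hgoal2
      _ ≤ (r - 1) * B / 2 := by linarith [hm]
      _ ≤ (t0:ℝ) := ht0ge
  · -- degenerate case: the target bound is nonpositive
    push_neg at hcase
    have hd12 : (d:ℝ) < 12 / (1 - ε) := by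
      rw [lt_div_iff₀ h1e]
      nlinarith [hrd, hcase, h1e]
    have hlogd2 : Real.log (d:ℝ) ≤ -L' := by
      have h1 : Real.log (d:ℝ) ≤ Real.log (12 / (1 - ε)) :=
        Real.log_le_log hdpos hd12.le
      have h2 : Real.log ((12:ℝ) / (1 - ε)) = Real.log 12 - Real.log (1 - ε) :=
        Real.log_div (by norm_num) h1e.ne'
      rw [h2] at h1
      rw [hL'eq]
      linarith
    have hsum : Real.log (d:ℝ) + L' ≤ 0 := by linarith
    have hprod : (r / 2) * (Real.log (d:ℝ) + L') ≤ 0 :=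
      mul_nonpos_of_nonneg_of_nonpos (by linarith) hsum
    have hE : r / 2 * Real.log (d:ℝ) + (L' / 2 - 3/4) * r
        = (r / 2) * (Real.log (d:ℝ) + L') - (3/4) * r := by ring
    calc r / 2 * Real.log (d:ℝ) + (Real.log ((1 - ε) / 12) / 2 - 3/4) * r
        = r / 2 * Real.log (d:ℝ) + (L' / 2 - 3/4) * r := by rw [← hL']
      _ = (r / 2) * (Real.log (d:ℝ) + L') - (3/4) * r := hE
      _ ≤ 0 := by linarith
      _ ≤ (t0:ℝ) := ht0nn
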